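/- For all complex numbers z, all nonzero real λ, and all n ≥ 0, we have ∑_{j=0}^{n} (-1)^j · C(n,j) · (z−j)_{n,λ} = n!, where (x)_{n,λ} = x(x−λ)(x−2λ)⋯(x−(n−1)λ) is the λ-falling factorial (with (x)_{0,λ} = 1). -/

import Mathlib

noncomputable def dffC (lam : ℝ) (z : ℂ) (n : ℕ) : ℂ :=
  ∏ i ∈ Finset.range n, (z - (i : ℂ) * (lam : ℂ))

section helpers
open Polynomial Finset

lemma taylor_neg_one_coeff (p : ℂ[X]) (m : ℕ) (h : p.natDegree ≤ m + 1) :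
    (Polynomial.taylor (-1) p).coeff m = p.coeff m - (m + 1) * p.coeff (m + 1) := by
  rw [Polynomial.taylor_coeff]
  have hd : (Polynomial.hasseDeriv m p).natDegree < 2 := by
    have := p.natDegree_hasseDeriv_le m
    omega
  rw [Polynomial.eval_eq_sum_range' hd]
  simp only [Finset.sum_range_succ, Polynomial.hasseDeriv_coeff]
  simp only [Finset.range_zero, Finset.sum_empty, zero_add, Nat.choose_self,
    add_comm 1 m, Nat.choose_succ_self_right, pow_zero, pow_one]
  push_cast
  ring

lemma key (n : ℕ) : ∀ p : ℂ[X], p.natDegree ≤ n → ∀ z : ℂ,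
    ∑ j ∈ Finset.range (n + 1), (-1 : ℂ) ^ j * (n.choose j : ℂ) * p.eval (z - j)
      = (n.factorial : ℂ) * p.coeff n := by
  induction n with
  | zero =>
    intro p hp z
    rw [Finset.sum_range_one]
    conv_lhs => rw [Polynomial.eq_C_of_natDegree_le_zero hp]
    simp
  | succ n IH =>
    intro p hp z
    set q : ℂ[X] := p - Polynomial.taylor (-1) p with hq
    have hqc : ∀ m, n ≤ m → q.coeff m = (m + 1) * p.coeff (m + 1) := by
      intro m hm
      have : p.natDegree ≤ m + 1 := le_trans hp (by omega)
      rw [hq, Polynomial.coeff_sub, taylor_neg_one_coeff p m this]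
      ring
    have hqd : q.natDegree ≤ n := by
      rw [Polynomial.natDegree_le_iff_coeff_eq_zero]
      intro N hN
      rw [hqc N (by omega), Polynomial.coeff_eq_zero_of_natDegree_lt (by omega), mul_zero]
    have hqe : ∀ w : ℂ, q.eval w = p.eval w - p.eval (w - 1) := by
      intro w
      rw [hq, Polynomial.eval_sub, Polynomial.taylor_eval]
      ring_nf
    have step : ∑ j ∈ Finset.range (n + 2), (-1 : ℂ) ^ j * ((n+1).choose j : ℂ) * p.eval (z - j)
        = ∑ j ∈ Finset.range (n + 1), (-1 : ℂ) ^ j * (n.choose j : ℂ) * q.eval (z - j) := by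
      simp only [hqe, mul_sub]
      rw [Finset.sum_sub_distrib]
      rw [Finset.sum_range_succ' (fun j => (-1 : ℂ) ^ j * (((n+1).choose j : ℕ) : ℂ) * p.eval (z - (j : ℕ)))]
      have e1 : ∀ x ∈ Finset.range (n + 1),
          (-1 : ℂ) ^ (x+1) * (((n+1).choose (x+1) : ℕ) : ℂ) * p.eval (z - ((x+1 : ℕ) : ℂ))
            = -((-1 : ℂ) ^ x * ((n.choose x : ℕ) : ℂ) * p.eval (z - x - 1))
              + -((-1 : ℂ) ^ x * ((n.choose (x+1) : ℕ) : ℂ) * p.eval (z - x - 1)) := by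
        intro x _
        have h2 : ((x+1 : ℕ) : ℂ) = (x : ℂ) + 1 := by push_cast; ring
        have h3 : (((n+1).choose (x+1) : ℕ) : ℂ) = ((n.choose x : ℕ) : ℂ) + ((n.choose (x+1) : ℕ) : ℂ) := by
          rw [Nat.choose_succ_succ]; push_cast; ring
        rw [h2, h3, ← sub_sub]
        ring
      rw [Finset.sum_congr rfl e1, Finset.sum_add_distrib]
      have e2 : ∑ x ∈ Finset.range (n + 1), -((-1 : ℂ) ^ x * ((n.choose x : ℕ) : ℂ) * p.eval (z - (x : ℕ) - 1))
          = -∑ x ∈ Finset.range (n + 1), (-1 : ℂ) ^ x * ((n.choose x : ℕ) : ℂ) * p.eval (z - (x : ℕ) - 1) :=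
        Finset.sum_neg_distrib _
      rw [e2]
      rw [Finset.sum_range_succ (fun x => -((-1 : ℂ) ^ x * ((n.choose (x+1) : ℕ) : ℂ) * p.eval (z - (x : ℕ) - 1)))]
      rw [Finset.sum_range_succ' (fun j => (-1 : ℂ) ^ j * ((n.choose j : ℕ) : ℂ) * p.eval (z - (j : ℕ)))]
      have e3 : ∀ x ∈ Finset.range n,
          (-1 : ℂ) ^ (x+1) * ((n.choose (x+1) : ℕ) : ℂ) * p.eval (z - ((x+1 : ℕ) : ℂ))
            = -((-1 : ℂ) ^ x * ((n.choose (x+1) : ℕ) : ℂ) * p.eval (z - x - 1)) := by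
        intro x _
        have h2 : ((x+1 : ℕ) : ℂ) = (x : ℂ) + 1 := by push_cast; ring
        rw [h2, ← sub_sub]
        ring
      rw [Finset.sum_congr rfl e3]
      simp [Nat.choose_succ_self]
      ring
    rw [step, IH q hqd z, hqc n le_rfl]
    rw [Nat.factorial_succ]
    push_cast
    ring
end helpers

open Polynomial in
theorem stmt0 (z : ℂ) (lam : ℝ) (hlam : lam ≠ 0) (n : ℕ) :
    ∑ j ∈ Finset.range (n + 1),
      (-1 : ℂ) ^ j * (Nat.choose n j : ℂ) * dffC lam (z - (j : ℂ)) n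
      = (Nat.factorial n : ℂ) := by
  set p : ℂ[X] := ∏ i ∈ Finset.range n, (X - C ((i : ℂ) * (lam : ℂ))) with hpdef
  have hmonic : p.Monic := monic_prod_of_monic _ _ fun i _ => monic_X_sub_C _
  have hdeg : p.natDegree = n := by
    rw [hpdef, Polynomial.natDegree_prod_of_monic _ _ fun i _ => monic_X_sub_C _]
    simp only [Polynomial.natDegree_X_sub_C]
    simp
  have heval : ∀ w : ℂ, p.eval w = dffC lam w n := by
    intro w
    rw [hpdef, dffC, Polynomial.eval_prod]
    simp
  have := key n p (le_of_eq hdeg) z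
  simp only [heval] at this
  rw [this, ← hdeg, Polynomial.Monic.coeff_natDegree hmonic, mul_one]
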